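/- For n ∈ ℕ define on ℤ × ℝ the functions f_1^{(n)}(ξ,τ) = f_2^{(n)}(ξ,τ) = δ_{ξ,2n} χ_{[-1,1]}(τ + ξ²), f_3^{(n)}(ξ,τ) = δ_{ξ,−n} χ_{[-1,1]}(τ + ξ²), f_4^{(n)}(ξ,τ) = δ_{ξ,0} χ_{[-1,1]}(τ + ξ²). Then the fourfold convolution satisfies (f_1^{(n)} * f_2^{(n)} * f_3^{(n)} * f_4^{(n)})(ξ,τ) ≥ δ_{ξ,3n} χ_{[-1,1]}(τ + ξ²), and consequently the periodic estimate ‖∏_{i=1}^4 u_i‖_{X^+_{s,b'}} ≤ c∏_{i=1}^4 ‖u_i‖_{X^+_{s,b}} fails for every s < 0 and all b, b' ∈ ℝ. -/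

import Mathlib

open MeasureTheory
open scoped ENNReal

/-- Japanese bracket. -/
noncomputable def jb (x : ℝ) : ℝ := Real.sqrt (1 + x ^ 2)

/-- Fourfold convolution on `ℤ × ℝ` (real-valued version). -/
noncomputable def conv4 (f g h k : ℤ × ℝ → ℝ) : ℤ × ℝ → ℝ := fun p =>
  ∑' ξ₁ : ℤ, ∑' ξ₂ : ℤ, ∑' ξ₃ : ℤ, ∫ τ₁ : ℝ, ∫ τ₂ : ℝ, ∫ τ₃ : ℝ,
    f (ξ₁, τ₁) * g (ξ₂, τ₂) * h (ξ₃, τ₃) *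
      k (p.1 - ξ₁ - ξ₂ - ξ₃, p.2 - τ₁ - τ₂ - τ₃)

/-- Fourfold convolution on `ℤ × ℝ` (`ℝ≥0∞`-valued version). -/
noncomputable def conv4E (f g h k : ℤ × ℝ → ℝ≥0∞) : ℤ × ℝ → ℝ≥0∞ := fun p =>
  ∑' ξ₁ : ℤ, ∑' ξ₂ : ℤ, ∑' ξ₃ : ℤ, ∫⁻ τ₁ : ℝ, ∫⁻ τ₂ : ℝ, ∫⁻ τ₃ : ℝ,
    f (ξ₁, τ₁) * g (ξ₂, τ₂) * h (ξ₃, τ₃) *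
      k (p.1 - ξ₁ - ξ₂ - ξ₃, p.2 - τ₁ - τ₂ - τ₃)

/-- The periodic `X^+_{s,b}` norm on the Fourier side (counting measure in `ξ ∈ ℤ`). -/
noncomputable def XpNormZ (s b : ℝ) (F : ℤ × ℝ → ℝ≥0∞) : ℝ≥0∞ :=
  (∑' ξ : ℤ, ∫⁻ τ : ℝ,
      ENNReal.ofReal (jb (ξ : ℝ) ^ (2 * s) * jb (τ + (ξ : ℝ) ^ 2) ^ (2 * b)) *
        F (ξ, τ) ^ 2) ^ ((1 : ℝ) / 2)

/-- `δ_{ξ,k} χ_{[-1,1]}(τ + ξ²)` as a real function on `ℤ × ℝ`. -/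
noncomputable def bump (k : ℤ) : ℤ × ℝ → ℝ := fun p =>
  (if p.1 = k then 1 else 0) *
    (if p.2 + (p.1 : ℝ) ^ 2 ∈ Set.Icc (-1 : ℝ) 1 then 1 else 0)


noncomputable def indE (x : ℝ) : ℝ≥0∞ := if x ∈ Set.Icc (-1:ℝ) 1 then 1 else 0
noncomputable def ind (x : ℝ) : ℝ := if x ∈ Set.Icc (-1:ℝ) 1 then 1 else 0

lemma indE_le_one (x : ℝ) : indE x ≤ 1 := by unfold indE; split <;> simp
lemma ind_nonneg (x : ℝ) : 0 ≤ ind x := by unfold ind; split <;> norm_num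
lemma ofReal_ind (x : ℝ) : ENNReal.ofReal (ind x) = indE x := by
  unfold ind indE; split <;> simp

lemma indE_of_mem {x : ℝ} (h : x ∈ Set.Icc (-1:ℝ) 1) : indE x = 1 := if_pos h

lemma measurable_indE : Measurable indE := by
  have : indE = (Set.Icc (-1:ℝ) 1).indicator (fun _ => (1:ℝ≥0∞)) := by
    funext x; simp [indE, Set.indicator]
  rw [this]; exact measurable_const.indicator measurableSet_Icc

lemma measurable_ind : Measurable ind := by
  have : ind = (Set.Icc (-1:ℝ) 1).indicator (fun _ => (1:ℝ)) := by
    funext x; simp [ind, Set.indicator]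
  rw [this]; exact measurable_const.indicator measurableSet_Icc

lemma lintegral_indE (a : ℝ) : ∫⁻ τ : ℝ, indE (τ + a) = 2 := by
  have h : ∀ τ : ℝ, indE (τ + a) = (Set.Icc (-1-a) (1-a)).indicator (fun _ => (1:ℝ≥0∞)) τ := by
    intro τ
    have : τ + a ∈ Set.Icc (-1:ℝ) 1 ↔ τ ∈ Set.Icc (-1-a) (1-a) := by
      simp only [Set.mem_Icc]
      constructor <;> rintro ⟨h1, h2⟩ <;> exact ⟨by linarith, by linarith⟩
    simp only [indE, Set.indicator]
    split_ifs with h1 h2 h2 <;> first | rfl | (exfalso; tauto)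
  simp only [h]
  rw [lintegral_indicator measurableSet_Icc, setLIntegral_one, Real.volume_Icc,
    show (1:ℝ)-a-(-1-a) = 2 by ring]
  norm_num

noncomputable def Fe (r a1 a2 a3 : ℝ) (τ₁ τ₂ τ₃ : ℝ) : ℝ≥0∞ :=
  indE (τ₁+a1) * indE (τ₂+a2) * indE (τ₃+a3) * indE (r-τ₁-τ₂-τ₃)

lemma measurable_Fe (r a1 a2 a3 : ℝ) :
    Measurable (fun q : (ℝ×ℝ)×ℝ => Fe r a1 a2 a3 q.1.1 q.1.2 q.2) := by
  unfold Fe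
  apply Measurable.mul
  apply Measurable.mul
  apply Measurable.mul
  · exact measurable_indE.comp (by fun_prop)
  · exact measurable_indE.comp (by fun_prop)
  · exact measurable_indE.comp (by fun_prop)
  · exact measurable_indE.comp (by fun_prop)

lemma measurable_Fe3 (r a1 a2 a3 τ₁ τ₂ : ℝ) :
    Measurable (fun τ₃ => Fe r a1 a2 a3 τ₁ τ₂ τ₃) :=
  (measurable_Fe r a1 a2 a3).comp (by fun_prop : Measurable (fun τ₃ : ℝ => ((τ₁, τ₂), τ₃)))

lemma measurable_L3 (r a1 a2 a3 τ₁ : ℝ) :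
    Measurable (fun τ₂ => ∫⁻ τ₃, Fe r a1 a2 a3 τ₁ τ₂ τ₃) := by
  apply Measurable.lintegral_prod_right
  exact (measurable_Fe r a1 a2 a3).comp
    (by fun_prop : Measurable (fun q : ℝ × ℝ => ((τ₁, q.1), q.2)))

lemma measurable_L2 (r a1 a2 a3 : ℝ) :
    Measurable (fun τ₁ => ∫⁻ τ₂, ∫⁻ τ₃, Fe r a1 a2 a3 τ₁ τ₂ τ₃) := by
  apply Measurable.lintegral_prod_right (f := fun τ₁ τ₂ => ∫⁻ τ₃, Fe r a1 a2 a3 τ₁ τ₂ τ₃)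
  apply Measurable.lintegral_prod_right (f := fun (q : ℝ × ℝ) τ₃ => Fe r a1 a2 a3 q.1 q.2 τ₃)
  exact (measurable_Fe r a1 a2 a3).comp
    (by fun_prop : Measurable (fun q : (ℝ × ℝ) × ℝ => ((q.1.1, q.1.2), q.2)))

lemma L3_le (r a1 a2 a3 τ₁ τ₂ : ℝ) :
    ∫⁻ τ₃, Fe r a1 a2 a3 τ₁ τ₂ τ₃ ≤ indE (τ₁+a1) * indE (τ₂+a2) * 2 := by
  calc ∫⁻ τ₃, Fe r a1 a2 a3 τ₁ τ₂ τ₃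
      ≤ ∫⁻ τ₃, indE (τ₁+a1) * indE (τ₂+a2) * indE (τ₃+a3) := by
        apply lintegral_mono; intro τ₃
        exact mul_le_of_le_one_right' (indE_le_one _)
    _ = indE (τ₁+a1) * indE (τ₂+a2) * ∫⁻ τ₃, indE (τ₃+a3) := by
        rw [lintegral_const_mul' _ _ (by
          exact ne_top_of_le_ne_top (by norm_num)
            (mul_le_one' (indE_le_one _) (indE_le_one _)))]
    _ = indE (τ₁+a1) * indE (τ₂+a2) * 2 := by rw [lintegral_indE]

lemma L3_ne_top (r a1 a2 a3 τ₁ τ₂ : ℝ) :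
    ∫⁻ τ₃, Fe r a1 a2 a3 τ₁ τ₂ τ₃ ≠ ⊤ := by
  have h2 : ∫⁻ τ₃, Fe r a1 a2 a3 τ₁ τ₂ τ₃ ≤ 2 := by
    refine (L3_le r a1 a2 a3 τ₁ τ₂).trans ?_
    calc indE (τ₁+a1) * indE (τ₂+a2) * 2 ≤ 1 * 1 * 2 :=
          mul_le_mul' (mul_le_mul' (indE_le_one _) (indE_le_one _)) le_rfl
      _ = 2 := by norm_num
  exact ne_top_of_le_ne_top (by norm_num) h2

lemma L2_le (r a1 a2 a3 τ₁ : ℝ) :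
    ∫⁻ τ₂, ∫⁻ τ₃, Fe r a1 a2 a3 τ₁ τ₂ τ₃ ≤ indE (τ₁+a1) * 4 := by
  calc ∫⁻ τ₂, ∫⁻ τ₃, Fe r a1 a2 a3 τ₁ τ₂ τ₃
      ≤ ∫⁻ τ₂, (2 * indE (τ₁+a1)) * indE (τ₂+a2) := by
        apply lintegral_mono; intro τ₂
        calc ∫⁻ τ₃, Fe r a1 a2 a3 τ₁ τ₂ τ₃ ≤ indE (τ₁+a1) * indE (τ₂+a2) * 2 := L3_le _ _ _ _ _ _
          _ = (2 * indE (τ₁+a1)) * indE (τ₂+a2) := by ring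
    _ = (2 * indE (τ₁+a1)) * ∫⁻ τ₂, indE (τ₂+a2) := by
        rw [lintegral_const_mul' _ _ (by
          exact ENNReal.mul_ne_top (by norm_num) (ne_top_of_le_ne_top (by norm_num) (indE_le_one _)))]
    _ = indE (τ₁+a1) * 4 := by rw [lintegral_indE]; ring

lemma L2_ne_top (r a1 a2 a3 τ₁ : ℝ) :
    ∫⁻ τ₂, ∫⁻ τ₃, Fe r a1 a2 a3 τ₁ τ₂ τ₃ ≠ ⊤ := by
  have h2 : ∫⁻ τ₂, ∫⁻ τ₃, Fe r a1 a2 a3 τ₁ τ₂ τ₃ ≤ 4 := by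
    refine (L2_le r a1 a2 a3 τ₁).trans ?_
    calc indE (τ₁+a1) * 4 ≤ 1 * 4 := mul_le_mul' (indE_le_one _) le_rfl
      _ = 4 := by norm_num
  exact ne_top_of_le_ne_top (by norm_num) h2

lemma L1_le (r a1 a2 a3 : ℝ) :
    ∫⁻ τ₁, ∫⁻ τ₂, ∫⁻ τ₃, Fe r a1 a2 a3 τ₁ τ₂ τ₃ ≤ 8 := by
  calc ∫⁻ τ₁, ∫⁻ τ₂, ∫⁻ τ₃, Fe r a1 a2 a3 τ₁ τ₂ τ₃
      ≤ ∫⁻ τ₁, 4 * indE (τ₁+a1) := by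
        apply lintegral_mono; intro τ₁
        exact (L2_le r a1 a2 a3 τ₁).trans (le_of_eq (by ring))
    _ = 4 * ∫⁻ τ₁, indE (τ₁+a1) := lintegral_const_mul' _ _ (by norm_num)
    _ = 8 := by rw [lintegral_indE]; norm_num

lemma step_lintegral (a : ℝ) (G : ℝ → ℝ≥0∞)
    (hG : ∀ σ ∈ Set.Icc a (a+1), 1 ≤ G σ) : 1 ≤ ∫⁻ σ : ℝ, G σ := by
  calc (1:ℝ≥0∞) = ∫⁻ σ : ℝ in Set.Icc a (a+1), 1 := by
        rw [setLIntegral_one, Real.volume_Icc]; norm_num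
    _ ≤ ∫⁻ σ : ℝ in Set.Icc a (a+1), G σ := setLIntegral_mono' measurableSet_Icc hG
    _ ≤ ∫⁻ σ : ℝ, G σ := setLIntegral_le_lintegral _ _

lemma one_ge (r a3 : ℝ) (h : |r + a3| ≤ 1) :
    1 ≤ ∫⁻ τ₃ : ℝ, indE (τ₃ + a3) * indE (r - τ₃) := by
  have habs := abs_le.mp h
  apply step_lintegral ((r + a3)/2 - 1/2 - a3)
  intro σ hσ
  rw [Set.mem_Icc] at hσ
  have h1 : indE (σ + a3) = 1 := indE_of_mem (by constructor <;> [linarith [habs.1]; linarith [habs.2]])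
  have h2 : indE (r - σ) = 1 := indE_of_mem (by constructor <;> [linarith [habs.1]; linarith [habs.2]])
  rw [h1, h2, mul_one]

lemma two_ge (r a2 a3 : ℝ) (h : |r + a2 + a3| ≤ 1) :
    1 ≤ ∫⁻ τ₂ : ℝ, ∫⁻ τ₃ : ℝ, indE (τ₂ + a2) * indE (τ₃ + a3) * indE (r - τ₂ - τ₃) := by
  have habs := abs_le.mp h
  apply step_lintegral ((r + a2 + a3)/2 - 1/2 - a2)
  intro σ hσ
  rw [Set.mem_Icc] at hσ
  have h1 : indE (σ + a2) = 1 := indE_of_mem (by constructor <;> [linarith; linarith])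
  simp only [h1, one_mul]
  exact one_ge (r - σ) a3 (by rw [abs_le]; constructor <;> linarith)

lemma three_ge (r a1 a2 a3 : ℝ) (h : |r + a1 + a2 + a3| ≤ 1) :
    1 ≤ ∫⁻ τ₁ : ℝ, ∫⁻ τ₂ : ℝ, ∫⁻ τ₃ : ℝ,
      indE (τ₁ + a1) * indE (τ₂ + a2) * indE (τ₃ + a3) * indE (r - τ₁ - τ₂ - τ₃) := by
  have habs := abs_le.mp h
  apply step_lintegral ((r + a1 + a2 + a3)/2 - 1/2 - a1)
  intro σ hσ
  rw [Set.mem_Icc] at hσ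
  have h1 : indE (σ + a1) = 1 := indE_of_mem (by constructor <;> [linarith; linarith])
  simp only [h1, one_mul]
  exact two_ge (r - σ) a2 a3 (by rw [abs_le]; constructor <;> linarith)

-- real_triple
lemma real_triple (r a1 a2 a3 : ℝ) (h : |r + a1 + a2 + a3| ≤ 1) :
    1 ≤ ∫ τ₁ : ℝ, ∫ τ₂ : ℝ, ∫ τ₃ : ℝ,
      ind (τ₁+a1) * ind (τ₂+a2) * ind (τ₃+a3) * ind (r-τ₁-τ₂-τ₃) := by
  have key3 : ∀ τ₁ τ₂ : ℝ,
      (∫ τ₃ : ℝ, ind (τ₁+a1) * ind (τ₂+a2) * ind (τ₃+a3) * ind (r-τ₁-τ₂-τ₃))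
        = (∫⁻ τ₃, Fe r a1 a2 a3 τ₁ τ₂ τ₃).toReal := by
    intro τ₁ τ₂
    rw [integral_eq_lintegral_of_nonneg_ae
      (ae_of_all _ (fun τ₃ => by
        exact mul_nonneg (mul_nonneg (mul_nonneg (ind_nonneg _) (ind_nonneg _)) (ind_nonneg _)) (ind_nonneg _)))
      (by
        apply Measurable.aestronglyMeasurable
        apply Measurable.mul
        apply Measurable.mul
        · exact measurable_const
        · exact measurable_ind.comp (by fun_prop)
        · exact measurable_ind.comp (by fun_prop))]
    congr 1
    apply lintegral_congr
    intro τ₃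
    rw [ENNReal.ofReal_mul (mul_nonneg (mul_nonneg (ind_nonneg _) (ind_nonneg _)) (ind_nonneg _)),
      ENNReal.ofReal_mul (mul_nonneg (ind_nonneg _) (ind_nonneg _)),
      ENNReal.ofReal_mul (ind_nonneg _), ofReal_ind, ofReal_ind, ofReal_ind, ofReal_ind]
    rfl
  have key2 : ∀ τ₁ : ℝ,
      (∫ τ₂ : ℝ, (∫⁻ τ₃, Fe r a1 a2 a3 τ₁ τ₂ τ₃).toReal)
        = (∫⁻ τ₂, ∫⁻ τ₃, Fe r a1 a2 a3 τ₁ τ₂ τ₃).toReal := by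
    intro τ₁
    rw [integral_eq_lintegral_of_nonneg_ae
      (ae_of_all _ (fun _ => ENNReal.toReal_nonneg))
      ((measurable_L3 r a1 a2 a3 τ₁).ennreal_toReal.aestronglyMeasurable)]
    congr 1
    apply lintegral_congr
    intro τ₂
    exact ENNReal.ofReal_toReal (L3_ne_top r a1 a2 a3 τ₁ τ₂)
  have key1 :
      (∫ τ₁ : ℝ, (∫⁻ τ₂, ∫⁻ τ₃, Fe r a1 a2 a3 τ₁ τ₂ τ₃).toReal)
        = (∫⁻ τ₁, ∫⁻ τ₂, ∫⁻ τ₃, Fe r a1 a2 a3 τ₁ τ₂ τ₃).toReal := by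
    rw [integral_eq_lintegral_of_nonneg_ae
      (ae_of_all _ (fun _ => ENNReal.toReal_nonneg))
      ((measurable_L2 r a1 a2 a3).ennreal_toReal.aestronglyMeasurable)]
    congr 1
    apply lintegral_congr
    intro τ₁
    exact ENNReal.ofReal_toReal (L2_ne_top r a1 a2 a3 τ₁)
  simp only [key3, key2, key1]
  have h1 : 1 ≤ ∫⁻ τ₁, ∫⁻ τ₂, ∫⁻ τ₃, Fe r a1 a2 a3 τ₁ τ₂ τ₃ := three_ge r a1 a2 a3 h
  have h8 : ∫⁻ τ₁, ∫⁻ τ₂, ∫⁻ τ₃, Fe r a1 a2 a3 τ₁ τ₂ τ₃ ≠ ⊤ :=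
    ne_top_of_le_ne_top (by norm_num) (L1_le r a1 a2 a3)
  calc (1:ℝ) = (1:ℝ≥0∞).toReal := by norm_num
    _ ≤ _ := ENNReal.toReal_mono h8 h1


lemma bump_nonneg (k : ℤ) (p : ℤ × ℝ) : 0 ≤ bump k p := by
  unfold bump
  refine mul_nonneg ?_ ?_ <;> (split <;> norm_num)

lemma bump_diag (k : ℤ) (τ : ℝ) : bump k (k, τ) = ind (τ + (k:ℝ)^2) := by
  simp [bump, ind]

lemma conv4_bump_nonneg (k1 k2 k3 k4 : ℤ) (p : ℤ × ℝ) :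
    0 ≤ conv4 (bump k1) (bump k2) (bump k3) (bump k4) p := by
  unfold conv4
  refine tsum_nonneg fun ξ₁ => tsum_nonneg fun ξ₂ => tsum_nonneg fun ξ₃ =>
    integral_nonneg fun τ₁ => integral_nonneg fun τ₂ => integral_nonneg fun τ₃ => ?_
  exact mul_nonneg (mul_nonneg (mul_nonneg (bump_nonneg _ _) (bump_nonneg _ _))
    (bump_nonneg _ _)) (bump_nonneg _ _)

lemma part1 (n : ℕ) (p : ℤ × ℝ) :
    bump (3 * (n : ℤ)) p ≤
      conv4 (bump (2 * (n : ℤ))) (bump (2 * (n : ℤ))) (bump (-(n : ℤ))) (bump 0) p := by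
  by_cases h1 : p.1 = 3 * (n : ℤ)
  · by_cases h2 : p.2 + (p.1 : ℝ) ^ 2 ∈ Set.Icc (-1 : ℝ) 1
    · have hb : bump (3 * (n : ℤ)) p = 1 := by
        unfold bump; rw [if_pos h1, if_pos h2, mul_one]
      rw [hb]
      unfold conv4
      rw [tsum_eq_single (2*(n:ℤ)) (by intro b hb'; simp [bump, hb']),
        tsum_eq_single (2*(n:ℤ)) (by intro b hb'; simp [bump, hb']),
        tsum_eq_single (-(n:ℤ)) (by intro b hb'; simp [bump, hb'])]
      have hcoord : p.1 - 2*(n:ℤ) - 2*(n:ℤ) - -(n:ℤ) = 0 := by rw [h1]; ring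
      rw [hcoord]
      simp only [bump_diag, Int.cast_zero, ne_eq, OfNat.ofNat_ne_zero,
        not_false_eq_true, zero_pow, add_zero]
      apply real_triple
      rw [h1] at h2
      rw [Set.mem_Icc] at h2
      rw [abs_le]
      push_cast
      push_cast at h2
      constructor <;> nlinarith [h2.1, h2.2]
    · have hb : bump (3 * (n : ℤ)) p = 0 := by
        unfold bump; rw [if_neg h2, mul_zero]
      rw [hb]; exact conv4_bump_nonneg _ _ _ _ _
  · have hb : bump (3 * (n : ℤ)) p = 0 := by
      unfold bump; rw [if_neg h1, zero_mul]
    rw [hb]; exact conv4_bump_nonneg _ _ _ _ _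



noncomputable def bumpE (k : ℤ) : ℤ × ℝ → ℝ≥0∞ := fun p =>
  (if p.1 = k then 1 else 0) * indE (p.2 + (p.1 : ℝ) ^ 2)

lemma bumpE_diag (k : ℤ) (τ : ℝ) : bumpE k (k, τ) = indE (τ + (k:ℝ)^2) := by
  simp [bumpE]

lemma bumpE_le_one (k : ℤ) (p : ℤ × ℝ) : bumpE k p ≤ 1 := by
  unfold bumpE
  refine mul_le_one' ?_ (indE_le_one _)
  split <;> norm_num

lemma measurable_bumpE (k : ℤ) : Measurable (bumpE k) := by
  have hf : Measurable (fun q : ℝ × ℤ => bumpE k (q.2, q.1)) := by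
    apply measurable_from_prod_countable_left
    intro ξ
    simp only [bumpE]
    have h2 : Measurable fun x : ℝ => indE (x + (ξ:ℝ)^2) :=
      measurable_indE.comp (measurable_add_const _)
    exact Measurable.mul
      (measurable_const : Measurable fun _ : ℝ => (if ξ = k then (1:ℝ≥0∞) else 0)) h2
  exact hf.comp (measurable_snd.prodMk measurable_fst)

lemma indE_sq (x : ℝ) : indE x ^ 2 = indE x := by unfold indE; split <;> simp

lemma conv4E_ge (n : ℕ) (p : ℤ × ℝ) :
    bumpE (3 * (n : ℤ)) p ≤
      conv4E (bumpE (2 * (n : ℤ))) (bumpE (2 * (n : ℤ))) (bumpE (-(n : ℤ))) (bumpE 0) p := by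
  by_cases h1 : p.1 = 3 * (n : ℤ)
  · by_cases h2 : p.2 + (p.1 : ℝ) ^ 2 ∈ Set.Icc (-1 : ℝ) 1
    · unfold conv4E
      refine le_trans ?_ (ENNReal.le_tsum (2*(n:ℤ)))
      refine le_trans ?_ (ENNReal.le_tsum (2*(n:ℤ)))
      refine le_trans ?_ (ENNReal.le_tsum (-(n:ℤ)))
      have hcoord : p.1 - 2*(n:ℤ) - 2*(n:ℤ) - -(n:ℤ) = 0 := by rw [h1]; ring
      rw [hcoord]
      simp only [bumpE_diag, Int.cast_zero, ne_eq, OfNat.ofNat_ne_zero,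
        not_false_eq_true, zero_pow, add_zero]
      refine le_trans (bumpE_le_one _ _) ?_
      apply three_ge
      rw [h1] at h2
      rw [Set.mem_Icc] at h2
      rw [abs_le]
      push_cast
      push_cast at h2
      constructor <;> nlinarith [h2.1, h2.2]
    · have : bumpE (3 * (n : ℤ)) p = 0 := by
        unfold bumpE indE; rw [if_neg h2, mul_zero]
      rw [this]; exact zero_le
  · have : bumpE (3 * (n : ℤ)) p = 0 := by
      unfold bumpE; rw [if_neg h1, zero_mul]
    rw [this]; exact zero_le

lemma XpNormZ_mono {s b : ℝ} {F G : ℤ × ℝ → ℝ≥0∞} (h : ∀ p, F p ≤ G p) :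
    XpNormZ s b F ≤ XpNormZ s b G := by
  unfold XpNormZ
  refine ENNReal.rpow_le_rpow ?_ (by norm_num)
  refine ENNReal.tsum_le_tsum fun ξ => ?_
  refine lintegral_mono fun τ => ?_
  exact mul_le_mul_right (pow_le_pow_left' (h (ξ, τ)) 2) _

lemma XpNormZ_bumpE (s b : ℝ) (k : ℤ) :
    XpNormZ s b (bumpE k) =
      (∫⁻ τ : ℝ, ENNReal.ofReal (jb (k:ℝ) ^ (2*s) * jb (τ + (k:ℝ)^2) ^ (2*b)) *
        indE (τ + (k:ℝ)^2)) ^ ((1:ℝ)/2) := by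
  unfold XpNormZ
  rw [tsum_eq_single k (by intro b' hb'; simp [bumpE, hb'])]
  congr 1
  apply lintegral_congr
  intro τ
  rw [bumpE_diag, indE_sq]
lemma jb_pos (x : ℝ) : 0 < jb x := Real.sqrt_pos.mpr (by positivity)
lemma jb_nonneg (x : ℝ) : 0 ≤ jb x := (jb_pos x).le
lemma one_le_jb (x : ℝ) : 1 ≤ jb x := by
  unfold jb
  calc (1:ℝ) = Real.sqrt 1 := by simp
    _ ≤ Real.sqrt (1 + x^2) := Real.sqrt_le_sqrt (by nlinarith [sq_nonneg x])
lemma jb_le_two {x : ℝ} (h : x ∈ Set.Icc (-1:ℝ) 1) : jb x ≤ 2 := by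
  unfold jb
  rw [Set.mem_Icc] at h
  rw [show (2:ℝ) = Real.sqrt (2^2) from (Real.sqrt_sq (by norm_num)).symm]
  exact Real.sqrt_le_sqrt (by nlinarith [h.1, h.2])
lemma jb_zero : jb 0 = 1 := by simp [jb]
lemma jb_neg (x : ℝ) : jb (-x) = jb x := by simp [jb]

lemma rpow_ge_min {a : ℝ} (h1 : 1 ≤ a) (h2 : a ≤ 2) (e : ℝ) :
    min ((2:ℝ)^e) 1 ≤ a ^ e := by
  rcases le_or_gt 0 e with he | he
  · refine (min_le_right _ _).trans ?_
    calc (1:ℝ) = 1 ^ e := (Real.one_rpow e).symm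
      _ ≤ a ^ e := Real.rpow_le_rpow (by norm_num) h1 he
  · exact (min_le_left _ _).trans (Real.rpow_le_rpow_of_nonpos (by linarith) h2 he.le)

lemma rpow_le_max {a : ℝ} (h1 : 1 ≤ a) (h2 : a ≤ 2) (e : ℝ) :
    a ^ e ≤ max ((2:ℝ)^e) 1 := by
  rcases le_or_gt 0 e with he | he
  · exact (Real.rpow_le_rpow (by linarith) h2 he).trans (le_max_left _ _)
  · exact (Real.rpow_le_one_of_one_le_of_nonpos h1 he.le).trans (le_max_right _ _)

lemma XpNormZ_bumpE_le (s b : ℝ) (k : ℤ) {K : ℝ} (hK : K = max ((2:ℝ)^(2*b)) 1) :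
    XpNormZ s b (bumpE k) ≤
      ENNReal.ofReal ((2 * (jb (k:ℝ) ^ (2*s) * K)) ^ ((1:ℝ)/2)) := by
  have hKpos : (0:ℝ) < K := by rw [hK]; exact lt_of_lt_of_le one_pos (le_max_right _ _)
  rw [XpNormZ_bumpE]
  have hpt : ∀ τ : ℝ,
      ENNReal.ofReal (jb (k:ℝ)^(2*s) * jb (τ+(k:ℝ)^2)^(2*b)) * indE (τ+(k:ℝ)^2)
        ≤ ENNReal.ofReal (jb (k:ℝ)^(2*s) * K) * indE (τ+(k:ℝ)^2) := by
    intro τ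
    by_cases hτ : τ + (k:ℝ)^2 ∈ Set.Icc (-1:ℝ) 1
    · refine mul_le_mul_left (ENNReal.ofReal_le_ofReal ?_) _
      refine mul_le_mul_of_nonneg_left ?_ (Real.rpow_nonneg (jb_nonneg _) _)
      rw [hK]
      exact rpow_le_max (one_le_jb _) (jb_le_two hτ) _
    · have h0 : indE (τ + (k:ℝ)^2) = 0 := if_neg hτ
      rw [h0, mul_zero, mul_zero]
  have hpos : (0:ℝ) < 2 * (jb (k:ℝ) ^ (2*s) * K) :=
    mul_pos two_pos (mul_pos (Real.rpow_pos_of_pos (jb_pos _) _) hKpos)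
  calc (∫⁻ τ : ℝ, ENNReal.ofReal (jb (k:ℝ)^(2*s) * jb (τ+(k:ℝ)^2)^(2*b)) *
          indE (τ+(k:ℝ)^2)) ^ ((1:ℝ)/2)
      ≤ (∫⁻ τ : ℝ, ENNReal.ofReal (jb (k:ℝ)^(2*s) * K) * indE (τ+(k:ℝ)^2)) ^ ((1:ℝ)/2) :=
        ENNReal.rpow_le_rpow (lintegral_mono hpt) (by norm_num)
    _ = (ENNReal.ofReal (jb (k:ℝ)^(2*s) * K) * 2) ^ ((1:ℝ)/2) := by
        rw [lintegral_const_mul' _ _ ENNReal.ofReal_ne_top, lintegral_indE]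
    _ = (ENNReal.ofReal (2 * (jb (k:ℝ)^(2*s) * K))) ^ ((1:ℝ)/2) := by
        rw [ENNReal.ofReal_mul (by norm_num : (0:ℝ) ≤ 2), ENNReal.ofReal_ofNat, mul_comm]
    _ = ENNReal.ofReal ((2 * (jb (k:ℝ)^(2*s) * K)) ^ ((1:ℝ)/2)) :=
        ENNReal.ofReal_rpow_of_pos hpos

lemma XpNormZ_bumpE_ge (s b : ℝ) (k : ℤ) {K : ℝ} (hK : K = min ((2:ℝ)^(2*b)) 1) :
    ENNReal.ofReal ((2 * (jb (k:ℝ) ^ (2*s) * K)) ^ ((1:ℝ)/2)) ≤ XpNormZ s b (bumpE k) := by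
  have hKpos : (0:ℝ) < K := by
    rw [hK]; exact lt_min (Real.rpow_pos_of_pos two_pos _) one_pos
  rw [XpNormZ_bumpE]
  have hpt : ∀ τ : ℝ,
      ENNReal.ofReal (jb (k:ℝ)^(2*s) * K) * indE (τ+(k:ℝ)^2)
        ≤ ENNReal.ofReal (jb (k:ℝ)^(2*s) * jb (τ+(k:ℝ)^2)^(2*b)) * indE (τ+(k:ℝ)^2) := by
    intro τ
    by_cases hτ : τ + (k:ℝ)^2 ∈ Set.Icc (-1:ℝ) 1
    · refine mul_le_mul_left (ENNReal.ofReal_le_ofReal ?_) _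
      refine mul_le_mul_of_nonneg_left ?_ (Real.rpow_nonneg (jb_nonneg _) _)
      rw [hK]
      exact rpow_ge_min (one_le_jb _) (jb_le_two hτ) _
    · have h0 : indE (τ + (k:ℝ)^2) = 0 := if_neg hτ
      rw [h0, mul_zero, mul_zero]
  have hpos : (0:ℝ) < 2 * (jb (k:ℝ) ^ (2*s) * K) :=
    mul_pos two_pos (mul_pos (Real.rpow_pos_of_pos (jb_pos _) _) hKpos)
  calc ENNReal.ofReal ((2 * (jb (k:ℝ)^(2*s) * K)) ^ ((1:ℝ)/2))
      = (ENNReal.ofReal (2 * (jb (k:ℝ)^(2*s) * K))) ^ ((1:ℝ)/2) :=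
        (ENNReal.ofReal_rpow_of_pos hpos).symm
    _ = (ENNReal.ofReal (jb (k:ℝ)^(2*s) * K) * 2) ^ ((1:ℝ)/2) := by
        rw [ENNReal.ofReal_mul (by norm_num : (0:ℝ) ≤ 2), ENNReal.ofReal_ofNat, mul_comm]
    _ = (∫⁻ τ : ℝ, ENNReal.ofReal (jb (k:ℝ)^(2*s) * K) * indE (τ+(k:ℝ)^2)) ^ ((1:ℝ)/2) := by
        rw [lintegral_const_mul' _ _ ENNReal.ofReal_ne_top, lintegral_indE]
    _ ≤ _ := ENNReal.rpow_le_rpow (lintegral_mono hpt) (by norm_num)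
set_option maxHeartbeats 1000000 in
lemma part2 (s : ℝ) (hs : s < 0) (b b' : ℝ) :
    ¬ ∃ c : ℝ, 0 < c ∧ ∀ F₁ F₂ F₃ F₄ : ℤ × ℝ → ℝ≥0∞,
      Measurable F₁ → Measurable F₂ → Measurable F₃ → Measurable F₄ →
      XpNormZ s b' (conv4E F₁ F₂ F₃ F₄) ≤
        ENNReal.ofReal c * XpNormZ s b F₁ * XpNormZ s b F₂ * XpNormZ s b F₃ *
          XpNormZ s b F₄ := by
  rintro ⟨c, hc, hineq⟩
  set K : ℝ := max ((2:ℝ)^(2*b)) 1 with hKdef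
  set K' : ℝ := min ((2:ℝ)^(2*b')) 1 with hK'def
  have hKpos : (0:ℝ) < K := by rw [hKdef]; positivity
  have hK'pos : (0:ℝ) < K' := by rw [hK'def]; positivity
  set E2 : ℝ := (2:ℝ)^((1:ℝ)/2) with hE2def
  have hE2pos : 0 < E2 := Real.rpow_pos_of_pos two_pos _
  have hEKpos : 0 < K^((1:ℝ)/2) := Real.rpow_pos_of_pos hKpos _
  have hEK'pos : 0 < K'^((1:ℝ)/2) := Real.rpow_pos_of_pos hK'pos _
  set Q : ℝ := (c*E2*E2*E2*E2*K^((1:ℝ)/2)*K^((1:ℝ)/2)*K^((1:ℝ)/2)*K^((1:ℝ)/2))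
      / (E2*K'^((1:ℝ)/2)) with hQdef
  have hnum : 0 < c*E2*E2*E2*E2*K^((1:ℝ)/2)*K^((1:ℝ)/2)*K^((1:ℝ)/2)*K^((1:ℝ)/2) := by
    have := hc; positivity
  have hden : 0 < E2*K'^((1:ℝ)/2) := mul_pos hE2pos hEK'pos
  have hQpos : 0 < Q := div_pos hnum hden
  obtain ⟨N, hN⟩ := exists_nat_gt (max 1 (Q ^ ((1:ℝ)/(-s))))
  set N' : ℝ := (N:ℝ) with hN'def
  have h1N : (1:ℝ) ≤ N' := le_of_lt (lt_of_le_of_lt (le_max_left _ _) hN)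
  have hN'pos : (0:ℝ) < N' := lt_of_lt_of_le one_pos h1N
  have H := hineq (bumpE (2*(N:ℤ))) (bumpE (2*(N:ℤ))) (bumpE (-(N:ℤ))) (bumpE 0)
    (measurable_bumpE _) (measurable_bumpE _) (measurable_bumpE _) (measurable_bumpE _)
  have hL := (XpNormZ_bumpE_ge s b' (3*(N:ℤ)) hK'def).trans
    (XpNormZ_mono (conv4E_ge N))
  have U1 := XpNormZ_bumpE_le s b (2*(N:ℤ)) hKdef
  have U3 := XpNormZ_bumpE_le s b (-(N:ℤ)) hKdef
  have U4 := XpNormZ_bumpE_le s b 0 hKdef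
  have hR := mul_le_mul' (mul_le_mul' (mul_le_mul'
    (mul_le_mul' (le_refl (ENNReal.ofReal c)) U1) U1) U3) U4
  have Hbig := hL.trans (H.trans hR)
  have hrn : ∀ x : ℝ, (0:ℝ) ≤ (2*(jb x^(2*s)*K))^((1:ℝ)/2) := fun x =>
    Real.rpow_nonneg (mul_nonneg (by norm_num)
      (mul_nonneg (Real.rpow_nonneg (jb_nonneg _) _) hKpos.le)) _
  rw [← ENNReal.ofReal_mul hc.le,
    ← ENNReal.ofReal_mul (mul_nonneg hc.le (hrn _)),
    ← ENNReal.ofReal_mul (mul_nonneg (mul_nonneg hc.le (hrn _)) (hrn _)),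
    ← ENNReal.ofReal_mul (mul_nonneg (mul_nonneg (mul_nonneg hc.le (hrn _)) (hrn _)) (hrn _))]
    at Hbig
  have Hreal := (ENNReal.ofReal_le_ofReal_iff
    (mul_nonneg (mul_nonneg (mul_nonneg (mul_nonneg hc.le (hrn _)) (hrn _)) (hrn _)) (hrn _))).mp
    Hbig
  have e3 : ((3*(N:ℤ) : ℤ):ℝ) = 3*N' := by rw [hN'def]; push_cast; ring
  have e2 : ((2*(N:ℤ) : ℤ):ℝ) = 2*N' := by rw [hN'def]; push_cast; ring
  have em : ((-(N:ℤ) : ℤ):ℝ) = -N' := by rw [hN'def]; push_cast; ring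
  have e0 : (((0:ℤ)):ℝ) = (0:ℝ) := by norm_num
  rw [e3, e2, em, e0, jb_neg, jb_zero] at Hreal
  have expand : ∀ x C : ℝ, 0 < x → 0 < C →
      (2*(x^(2*s)*C))^((1:ℝ)/2) = E2 * x^s * C^((1:ℝ)/2) := by
    intro x C hx hC
    rw [hE2def,
      Real.mul_rpow (by norm_num) (mul_nonneg (Real.rpow_nonneg hx.le _) hC.le),
      Real.mul_rpow (Real.rpow_nonneg hx.le _) hC.le,
      ← Real.rpow_mul hx.le, show 2*s*((1:ℝ)/2) = s by ring]
    exact (mul_assoc _ _ _).symm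
  rw [expand (jb (3*N')) K' (jb_pos _) hK'pos,
    expand (jb (2*N')) K (jb_pos _) hKpos,
    expand (jb N') K (jb_pos _) hKpos,
    expand 1 K one_pos hKpos, Real.one_rpow] at Hreal
  -- key claim
  have claim : jb (2*N')^s * jb (2*N')^s * jb N'^s ≤ jb (3*N')^s * N'^s := by
    have hbase : jb (3*N') * N' ≤ jb (2*N') * jb (2*N') * jb N' := by
      have h1 : jb (3*N') ≤ 1 + 4*N'^2 := by
        unfold jb
        rw [show (1 + 4*N'^2 : ℝ) = Real.sqrt ((1+4*N'^2)^2) from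
          (Real.sqrt_sq (by positivity)).symm]
        exact Real.sqrt_le_sqrt (by nlinarith [h1N, sq_nonneg (N'^2-1), sq_nonneg N', sq_nonneg (N'-1)])
      have h2 : N' ≤ jb N' := by
        unfold jb
        have h := Real.sqrt_le_sqrt (show N'^2 ≤ 1 + N'^2 by linarith)
        rwa [Real.sqrt_sq hN'pos.le] at h
      have h3 : jb (2*N') * jb (2*N') = 1 + 4*N'^2 := by
        unfold jb
        rw [Real.mul_self_sqrt (by positivity)]
        ring
      calc jb (3*N') * N' ≤ (1 + 4*N'^2) * jb N' :=
            mul_le_mul h1 h2 hN'pos.le (by positivity)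
        _ = jb (2*N') * jb (2*N') * jb N' := by rw [h3]
    calc jb (2*N')^s * jb (2*N')^s * jb N'^s
        = (jb (2*N') * jb (2*N') * jb N')^s := by
          rw [Real.mul_rpow (mul_nonneg (jb_nonneg _) (jb_nonneg _)) (jb_nonneg _),
            Real.mul_rpow (jb_nonneg _) (jb_nonneg _)]
      _ ≤ (jb (3*N') * N')^s :=
          Real.rpow_le_rpow_of_nonpos (mul_pos (jb_pos _) hN'pos) hbase hs.le
      _ = jb (3*N')^s * N'^s := Real.mul_rpow (jb_nonneg _) hN'pos.le
  have hy3pos : 0 < jb (3*N')^s := Real.rpow_pos_of_pos (jb_pos _) _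
  have Hr2 : jb (3*N')^s * (E2 * K'^((1:ℝ)/2)) ≤
      jb (3*N')^s * ((c*E2*E2*E2*E2*K^((1:ℝ)/2)*K^((1:ℝ)/2)*K^((1:ℝ)/2)*K^((1:ℝ)/2)) * N'^s) := by
    calc jb (3*N')^s * (E2 * K'^((1:ℝ)/2)) = E2 * jb (3*N')^s * K'^((1:ℝ)/2) := by ring
      _ ≤ c * (E2*jb (2*N')^s*K^((1:ℝ)/2)) * (E2*jb (2*N')^s*K^((1:ℝ)/2))
            * (E2*jb N'^s*K^((1:ℝ)/2)) * (E2*1*K^((1:ℝ)/2)) := Hreal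
      _ = (c*E2*E2*E2*E2*K^((1:ℝ)/2)*K^((1:ℝ)/2)*K^((1:ℝ)/2)*K^((1:ℝ)/2))
            * (jb (2*N')^s * jb (2*N')^s * jb N'^s) := by ring
      _ ≤ (c*E2*E2*E2*E2*K^((1:ℝ)/2)*K^((1:ℝ)/2)*K^((1:ℝ)/2)*K^((1:ℝ)/2))
            * (jb (3*N')^s * N'^s) := mul_le_mul_of_nonneg_left claim hnum.le
      _ = jb (3*N')^s * ((c*E2*E2*E2*E2*K^((1:ℝ)/2)*K^((1:ℝ)/2)*K^((1:ℝ)/2)*K^((1:ℝ)/2)) * N'^s) := by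
          ring
  have Hr3 : E2 * K'^((1:ℝ)/2) ≤
      (c*E2*E2*E2*E2*K^((1:ℝ)/2)*K^((1:ℝ)/2)*K^((1:ℝ)/2)*K^((1:ℝ)/2)) * N'^s :=
    le_of_mul_le_mul_left Hr2 hy3pos
  have hsne : -s ≠ 0 := ne_of_gt (by linarith)
  have hgt : Q ^ ((1:ℝ)/(-s)) < N' := lt_of_le_of_lt (le_max_right _ _) hN
  have hlt : Q < N' ^ (-s) := by
    have h' := Real.rpow_lt_rpow (Real.rpow_nonneg hQpos.le _) hgt
      (by linarith : (0:ℝ) < -s)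
    rwa [← Real.rpow_mul hQpos.le, one_div, inv_mul_cancel₀ hsne, Real.rpow_one] at h'
  have hprod : N'^s * N'^(-s) = 1 := by
    rw [← Real.rpow_add hN'pos, add_neg_cancel, Real.rpow_zero]
  have hQeq : Q * (E2*K'^((1:ℝ)/2)) =
      c*E2*E2*E2*E2*K^((1:ℝ)/2)*K^((1:ℝ)/2)*K^((1:ℝ)/2)*K^((1:ℝ)/2) := by
    rw [hQdef]; exact div_mul_cancel₀ _ (ne_of_gt hden)
  have hfin : (c*E2*E2*E2*E2*K^((1:ℝ)/2)*K^((1:ℝ)/2)*K^((1:ℝ)/2)*K^((1:ℝ)/2)) * N'^s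
      < E2*K'^((1:ℝ)/2) := by
    calc (c*E2*E2*E2*E2*K^((1:ℝ)/2)*K^((1:ℝ)/2)*K^((1:ℝ)/2)*K^((1:ℝ)/2)) * N'^s
        = Q * (E2*K'^((1:ℝ)/2)) * N'^s := by rw [hQeq]
      _ < N'^(-s) * (E2*K'^((1:ℝ)/2)) * N'^s := by
          exact mul_lt_mul_of_pos_right (mul_lt_mul_of_pos_right hlt hden)
            (Real.rpow_pos_of_pos hN'pos _)
      _ = E2*K'^((1:ℝ)/2) := by
          rw [mul_comm (N'^(-s)) (E2*K'^((1:ℝ)/2)), mul_assoc,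
            mul_comm (N'^(-s)) (N'^s), hprod, mul_one]
  linarith [Hr3, hfin]

/-- The fourfold convolution of `f₁^{(n)}, ..., f₄^{(n)}` dominates
`δ_{ξ,3n} χ_{[-1,1]}(τ + ξ²)`; consequently the periodic estimate
`‖∏uᵢ‖_{X^+_{s,b'}} ≤ c ∏ ‖uᵢ‖_{X^+_{s,b}}` fails for every `s < 0` and all `b, b'`. -/
theorem periodic_quartic_failure :
    (∀ n : ℕ, ∀ p : ℤ × ℝ,
      bump (3 * (n : ℤ)) p ≤
        conv4 (bump (2 * (n : ℤ))) (bump (2 * (n : ℤ))) (bump (-(n : ℤ))) (bump 0) p) ∧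
    ∀ s : ℝ, s < 0 → ∀ b b' : ℝ,
      ¬ ∃ c : ℝ, 0 < c ∧ ∀ F₁ F₂ F₃ F₄ : ℤ × ℝ → ℝ≥0∞,
        Measurable F₁ → Measurable F₂ → Measurable F₃ → Measurable F₄ →
        XpNormZ s b' (conv4E F₁ F₂ F₃ F₄) ≤
          ENNReal.ofReal c * XpNormZ s b F₁ * XpNormZ s b F₂ * XpNormZ s b F₃ *
            XpNormZ s b F₄ := by
  exact ⟨fun n p => part1 n p, fun s hs b b' => part2 s hs b b'⟩
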